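/- Let A = ⊕_{k≥0} ℂ[x,y,z]_{3k} be the third Veronese subalgebra of ℂ[x,y,z] (all polynomials whose homogeneous components have degree divisible by 3). Then the Makar-Limanov invariant of A is trivial: the intersection of the kernels of all locally nilpotent ℂ-derivations of A equals the constants ℂ·1. -/

import Mathlib

open MvPolynomial

/-- The third Veronese subalgebra `A = ⊕_{k≥0} ℂ[x,y,z]_{3k}` of `ℂ[x,y,z]`: the
ℂ-subalgebra consisting of all polynomials each of whose monomials (hence each of whose
homogeneous components) has total degree divisible by 3.  Here `x = X 0`, `y = X 1`,
`z = X 2` in `MvPolynomial (Fin 3) ℂ`. -/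
noncomputable def veronese3 : Subalgebra ℂ (MvPolynomial (Fin 3) ℂ) where
  carrier := {p | ∀ d : Fin 3 →₀ ℕ, coeff d p ≠ 0 → 3 ∣ d.sum fun _ e => e}
  mul_mem' := by
    intro p q hp hq d hd
    rw [coeff_mul] at hd
    obtain ⟨⟨u, v⟩, huv, hne⟩ := Finset.exists_ne_zero_of_sum_ne_zero hd
    replace huv : u + v = d := by simpa using huv
    have hu : coeff u p ≠ 0 := left_ne_zero_of_mul hne
    have hv : coeff v q ≠ 0 := right_ne_zero_of_mul hne
    have hsum : (u + v).sum (fun _ e => e) = u.sum (fun _ e => e) + v.sum (fun _ e => e) :=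
      Finsupp.sum_add_index' (fun _ => rfl) (fun _ _ _ => rfl)
    have := dvd_add (hp u hu) (hq v hv)
    rw [← hsum, huv] at this
    exact this
  one_mem' := by
    intro d hd
    rw [coeff_one] at hd
    by_cases h : (0 : Fin 3 →₀ ℕ) = d
    · subst h; simp
    · simp [h] at hd
  add_mem' := by
    intro p q hp hq d hd
    rw [coeff_add] at hd
    by_cases h : coeff d p ≠ 0
    · exact hp d h
    · push_neg at h
      rw [h, zero_add] at hd
      exact hq d hd
  zero_mem' := by
    intro d hd
    simp at hd
  algebraMap_mem' := by
    intro r d hd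
    rw [algebraMap_eq, coeff_C] at hd
    by_cases h : (0 : Fin 3 →₀ ℕ) = d
    · subst h; simp
    · simp [h] at hd


section Aux
set_option synthInstance.maxHeartbeats 1000000
set_option maxHeartbeats 1000000

lemma coeff_pderiv' {σ : Type*} [DecidableEq σ] (i : σ) (p : MvPolynomial σ ℂ) (d : σ →₀ ℕ) :
    coeff d (pderiv i p) = (d i + 1) * coeff (d + Finsupp.single i 1) p := by
  induction p using MvPolynomial.induction_on' with
  | monomial e c =>
    rw [pderiv_monomial, coeff_monomial, coeff_monomial]
    split_ifs with h1 h2 h2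
    · rw [h2]; simp [Finsupp.add_apply]; ring
    · rcases Nat.eq_zero_or_pos (e i) with h0 | h0
      · simp [h0]
      · exfalso; apply h2
        have hc : e - Finsupp.single i 1 + Finsupp.single i 1 = e :=
          tsub_add_cancel_of_le (by rwa [Finsupp.single_le_iff])
        rw [← hc, h1]
    · exfalso; apply h1; rw [h2]; exact add_tsub_cancel_right _ _
    · ring
  | add p q hp hq => simp [hp, hq, mul_add]

lemma pderiv_eq_zero_of_degreeOf_eq_zero {σ : Type*} [DecidableEq σ] {j : σ}
    {p : MvPolynomial σ ℂ} (h : degreeOf j p = 0) : pderiv j p = 0 := by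
  ext d
  rw [coeff_pderiv', coeff_zero]
  have h2 : coeff (d + Finsupp.single j 1) p = 0 := by
    by_contra hc
    have := degreeOf_le_iff.mp h.le (d + Finsupp.single j 1) (mem_support_iff.mpr hc)
    simp [Finsupp.add_apply] at this
  rw [h2, mul_zero]

lemma degreeOf_pderiv_le {σ : Type*} [DecidableEq σ] {j : σ} {p : MvPolynomial σ ℂ} {n : ℕ}
    (h : degreeOf j p ≤ n + 1) : degreeOf j (pderiv j p) ≤ n := by
  rw [degreeOf_le_iff]
  intro m hm
  rw [mem_support_iff, coeff_pderiv'] at hm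
  have := degreeOf_le_iff.mp h (m + Finsupp.single j 1)
    (mem_support_iff.mpr (right_ne_zero_of_mul hm))
  simp [Finsupp.add_apply] at this
  omega

lemma eq_C_of_pderiv_eq_zero {p : MvPolynomial (Fin 3) ℂ}
    (h : ∀ i, pderiv i p = 0) : p = C (coeff 0 p) := by
  ext d
  rw [coeff_C]
  split_ifs with hd
  · rw [← hd]
  · by_contra hc
    have hd' : d ≠ 0 := fun h0 => hd (h0.symm)
    obtain ⟨i, hi⟩ : ∃ i, d i ≠ 0 := by
      by_contra hall; push_neg at hall
      exact hd' (Finsupp.ext fun i => hall i)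
    have key := coeff_pderiv' i p (d - Finsupp.single i 1)
    rw [h i, coeff_zero] at key
    have hc2 : d - Finsupp.single i 1 + Finsupp.single i 1 = d :=
      tsub_add_cancel_of_le (by rw [Finsupp.single_le_iff]; omega)
    rw [hc2] at key
    rcases mul_eq_zero.mp key.symm with h' | h'
    · exact absurd h' (Nat.cast_add_one_ne_zero _)
    · exact hc h'

/-- degree sum of an exponent vector -/
private lemma sdeg_sub_add {d : Fin 3 →₀ ℕ} {i : Fin 3} (hi : 1 ≤ d i) :
    ((d - Finsupp.single i 1).sum fun _ e => e) + 1 = d.sum fun _ e => e := by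
  have hc : d - Finsupp.single i 1 + Finsupp.single i 1 = d :=
    tsub_add_cancel_of_le (by rwa [Finsupp.single_le_iff])
  have := Finsupp.sum_add_index' (f := d - Finsupp.single i 1) (g := Finsupp.single i 1)
    (h := fun (_ : Fin 3) (e : ℕ) => e) (fun _ => rfl) (fun _ _ _ => rfl)
  rw [hc] at this
  rw [this, Finsupp.sum_single_index rfl]

private lemma vmem {i j : Fin 3} {p : MvPolynomial (Fin 3) ℂ} (hp : p ∈ veronese3) :
    X i * pderiv j p ∈ veronese3 := by
  intro d hd
  rw [coeff_X_mul'] at hd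
  by_cases hi : i ∈ d.support
  · rw [if_pos hi, coeff_pderiv'] at hd
    have h3 := hp _ (right_ne_zero_of_mul hd)
    have hii : 1 ≤ d i := by
      rw [Finsupp.mem_support_iff] at hi; omega
    have hsum : ((d - Finsupp.single i 1 + Finsupp.single j 1).sum fun _ e => e)
        = d.sum fun _ e => e := by
      have h1 := Finsupp.sum_add_index' (f := d - Finsupp.single i 1)
        (g := Finsupp.single j 1)
        (h := fun (_ : Fin 3) (e : ℕ) => e) (fun _ => rfl) (fun _ _ _ => rfl)
      rw [h1, Finsupp.sum_single_index rfl, ← sdeg_sub_add hii]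
    rwa [hsum] at h3
  · rw [if_neg hi] at hd; exact absurd rfl hd

/-- the derivation `X i * ∂/∂Xⱼ` restricted to the Veronese subalgebra -/
private noncomputable def vd (i j : Fin 3) : Derivation ℂ ↥veronese3 ↥veronese3 where
  toFun p := ⟨X i * pderiv j (p : MvPolynomial (Fin 3) ℂ), vmem p.2⟩
  map_add' p q := Subtype.ext (by simp [mul_add])
  map_smul' c p := Subtype.ext (by simp [mul_smul_comm])
  map_one_eq_zero' := Subtype.ext (by simp)
  leibniz' p q := Subtype.ext (by
    show X i * pderiv j ((p : MvPolynomial (Fin 3) ℂ) * (q : MvPolynomial (Fin 3) ℂ)) = _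
    simp only [smul_eq_mul, MulMemClass.coe_mul, MulMemClass.coe_mul, AddMemClass.coe_add,
      pderiv_mul]
    show _ = (p : MvPolynomial (Fin 3) ℂ) * (X i * pderiv j (q : MvPolynomial (Fin 3) ℂ))
      + (q : MvPolynomial (Fin 3) ℂ) * (X i * pderiv j (p : MvPolynomial (Fin 3) ℂ))
    ring)

private lemma vd_iter_zero (i j : Fin 3) (hij : j ≠ i) :
    ∀ n (p : MvPolynomial (Fin 3) ℂ), degreeOf j p ≤ n →
      (fun q => X i * pderiv j q)^[n + 1] p = 0 := by
  intro n
  induction n with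
  | zero =>
    intro p hp
    simp [pderiv_eq_zero_of_degreeOf_eq_zero (Nat.le_zero.mp hp)]
  | succ n ih =>
    intro p hp
    rw [Function.iterate_succ_apply]
    by_cases h0 : pderiv j p = 0
    · simp only [h0, mul_zero]
      exact ih 0 (by simp [degreeOf_zero])
    · apply ih
      rw [mul_comm, degreeOf_mul_X_of_ne _ hij]
      exact degreeOf_pderiv_le hp

private lemma vd_coe_iter (i j : Fin 3) :
    ∀ n (p : ↥veronese3), (((⇑(vd i j))^[n] p : ↥veronese3) : MvPolynomial (Fin 3) ℂ)
      = (fun q => X i * pderiv j q)^[n] (p : MvPolynomial (Fin 3) ℂ) := by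
  intro n
  induction n with
  | zero => intro p; rfl
  | succ n ih =>
    intro p
    rw [Function.iterate_succ_apply, Function.iterate_succ_apply, ih (vd i j p)]
    rfl

private lemma vd_locally_nilpotent (i j : Fin 3) (hij : j ≠ i) (p : ↥veronese3) :
    ∃ n : ℕ, (⇑(vd i j))^[n] p = 0 := by
  refine ⟨degreeOf j (p : MvPolynomial (Fin 3) ℂ) + 1, Subtype.ext ?_⟩
  rw [vd_coe_iter]
  exact vd_iter_zero i j hij _ _ le_rfl

end Aux

set_option synthInstance.maxHeartbeats 1000000 in
set_option maxHeartbeats 1000000 in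
/-- case `d = 9` of the Makar-Limanov assertion in Theorem 0.1. The
Makar-Limanov invariant of the third Veronese subalgebra `A = ⊕_{k≥0} ℂ[x,y,z]_{3k}` is
trivial: an element of `A` lies in the kernel of every locally nilpotent ℂ-derivation of
`A` if and only if it is a constant, i.e. a scalar multiple of `1`. -/
theorem veronese3_makarLimanov_trivial (a : ↥veronese3) :
    (∀ D : Derivation ℂ ↥veronese3 ↥veronese3,
        (∀ x : ↥veronese3, ∃ n : ℕ, (⇑D)^[n] x = 0) → D a = 0) ↔
      ∃ c : ℂ, a = algebraMap ℂ ↥veronese3 c := by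
  constructor
  · intro h
    have key : ∀ i j : Fin 3, j ≠ i → pderiv j (a : MvPolynomial (Fin 3) ℂ) = 0 := by
      intro i j hij
      have h1 := h (vd i j) (vd_locally_nilpotent i j hij)
      have h2 : X i * pderiv j (a : MvPolynomial (Fin 3) ℂ) = 0 := congrArg Subtype.val h1
      rcases mul_eq_zero.mp h2 with h' | h'
      · exact absurd h' (X_ne_zero i)
      · exact h'
    have hall : ∀ k : Fin 3, pderiv k (a : MvPolynomial (Fin 3) ℂ) = 0 := by
      intro k
      fin_cases k
      · exact key 1 0 (by decide)
      · exact key 0 1 (by decide)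
      · exact key 0 2 (by decide)
    refine ⟨coeff 0 (a : MvPolynomial (Fin 3) ℂ), Subtype.ext ?_⟩
    have hC := eq_C_of_pderiv_eq_zero hall
    conv_lhs => rw [hC]
    rfl
  · rintro ⟨c, rfl⟩
    intro D _
    exact Derivation.map_algebraMap D c
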